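/- For κ = 7, with ⟨x⟩ = sin(πx/7)/sin(π/7) for real x, define for nonnegative integers λ1, λ2 the quantity qdimG2(λ1,λ2) = ⟨λ1+1⟩·⟨λ2/3+1/3⟩·⟨λ1+λ2/3+4/3⟩·⟨λ1+2λ2/3+5/3⟩·⟨λ1+λ2+2⟩·⟨2λ1+λ2+3⟩ / (⟨1/3⟩·⟨1⟩·⟨4/3⟩·⟨5/3⟩·⟨2⟩·⟨3⟩). Then the sum of qdimG2(λ1,λ2)² over all pairs of nonnegative integers (λ1,λ2) with 2λ1+λ2 ≤ 3 equals (21/2)(5+√21). -/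

import Mathlib

set_option maxHeartbeats 1600000


/-- The q-number at altitude `κ`: `⟨x⟩ = sin(πx/κ)/sin(π/κ)`. -/
noncomputable def qnum (κ x : ℝ) : ℝ := Real.sin (Real.pi * x / κ) / Real.sin (Real.pi / κ)

/-- The quantum Weyl dimension of the irreducible G2 representation of highest weight
`{λ1,λ2}` at altitude κ = 7 (level k = 3). -/
noncomputable def qdimG2 (lam1 lam2 : ℕ) : ℝ :=
    qnum 7 (lam1 + 1) * qnum 7 (lam2 / 3 + 1/3) * qnum 7 (lam1 + lam2 / 3 + 4/3) *
      qnum 7 (lam1 + 2 * lam2 / 3 + 5/3) * qnum 7 (lam1 + lam2 + 2) *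
      qnum 7 (2 * lam1 + lam2 + 3) /
    (qnum 7 (1/3) * qnum 7 1 * qnum 7 (4/3) * qnum 7 (5/3) * qnum 7 2 * qnum 7 3)


private lemma Gd_cos_lb : (0.98:ℝ) < Real.cos (Real.pi/21) := by
  have h1 : 1 - (Real.pi/21)^2/2 ≤ Real.cos (Real.pi/21) := Real.one_sub_sq_div_two_le_cos
  have h2 : Real.pi < 3.15 := by linarith [Real.pi_lt_d2]
  have h3 : 0 < Real.pi := Real.pi_pos
  nlinarith

private lemma Gd_cos_ub : Real.cos (Real.pi/21) ≤ 1 := Real.cos_le_one _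

private lemma Gd_m6 : (1 + 16*Real.cos (Real.pi/21) + 32*Real.cos (Real.pi/21)^2 + (-48)*Real.cos (Real.pi/21)^3 + (-96)*Real.cos (Real.pi/21)^4 + 32*Real.cos (Real.pi/21)^5 + 64*Real.cos (Real.pi/21)^6) = (0:ℝ) := by
  have h2 : Real.cos (2*(Real.pi/21)) = ((-1) + 2*Real.cos (Real.pi/21)^2) := by
    rw [Real.cos_two_mul]; ring
  have h3 : Real.cos (3*(Real.pi/21)) = ((-3)*Real.cos (Real.pi/21) + 4*Real.cos (Real.pi/21)^3) := by
    have e1 := Real.cos_add (2*(Real.pi/21)) (Real.pi/21)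
    have e2 := Real.cos_sub (2*(Real.pi/21)) (Real.pi/21)
    rw [show (2:ℝ)*(Real.pi/21) + Real.pi/21 = 3*(Real.pi/21) by ring] at e1
    rw [show (2:ℝ)*(Real.pi/21) - Real.pi/21 = (Real.pi/21) by ring] at e2
    linear_combination e1 + e2 + (2*Real.cos (Real.pi/21))*h2
  have h4 : Real.cos (4*(Real.pi/21)) = (1 + (-8)*Real.cos (Real.pi/21)^2 + 8*Real.cos (Real.pi/21)^4) := by
    have e1 := Real.cos_add (3*(Real.pi/21)) (Real.pi/21)
    have e2 := Real.cos_sub (3*(Real.pi/21)) (Real.pi/21)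
    rw [show (3:ℝ)*(Real.pi/21) + Real.pi/21 = 4*(Real.pi/21) by ring] at e1
    rw [show (3:ℝ)*(Real.pi/21) - Real.pi/21 = 2*(Real.pi/21) by ring] at e2
    linear_combination e1 + e2 + (2*Real.cos (Real.pi/21))*h3 - h2
  have h5 : Real.cos (5*(Real.pi/21)) = (5*Real.cos (Real.pi/21) + (-20)*Real.cos (Real.pi/21)^3 + 16*Real.cos (Real.pi/21)^5) := by
    have e1 := Real.cos_add (4*(Real.pi/21)) (Real.pi/21)
    have e2 := Real.cos_sub (4*(Real.pi/21)) (Real.pi/21)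
    rw [show (4:ℝ)*(Real.pi/21) + Real.pi/21 = 5*(Real.pi/21) by ring] at e1
    rw [show (4:ℝ)*(Real.pi/21) - Real.pi/21 = 3*(Real.pi/21) by ring] at e2
    linear_combination e1 + e2 + (2*Real.cos (Real.pi/21))*h4 - h3
  have h6 : Real.cos (6*(Real.pi/21)) = ((-1) + 18*Real.cos (Real.pi/21)^2 + (-48)*Real.cos (Real.pi/21)^4 + 32*Real.cos (Real.pi/21)^6) := by
    have e1 := Real.cos_add (5*(Real.pi/21)) (Real.pi/21)
    have e2 := Real.cos_sub (5*(Real.pi/21)) (Real.pi/21)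
    rw [show (5:ℝ)*(Real.pi/21) + Real.pi/21 = 6*(Real.pi/21) by ring] at e1
    rw [show (5:ℝ)*(Real.pi/21) - Real.pi/21 = 4*(Real.pi/21) by ring] at e2
    linear_combination e1 + e2 + (2*Real.cos (Real.pi/21))*h5 - h4
  have h7 : Real.cos (7*(Real.pi/21)) = ((-7)*Real.cos (Real.pi/21) + 56*Real.cos (Real.pi/21)^3 + (-112)*Real.cos (Real.pi/21)^5 + 64*Real.cos (Real.pi/21)^7) := by
    have e1 := Real.cos_add (6*(Real.pi/21)) (Real.pi/21)
    have e2 := Real.cos_sub (6*(Real.pi/21)) (Real.pi/21)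
    rw [show (6:ℝ)*(Real.pi/21) + Real.pi/21 = 7*(Real.pi/21) by ring] at e1
    rw [show (6:ℝ)*(Real.pi/21) - Real.pi/21 = 5*(Real.pi/21) by ring] at e2
    linear_combination e1 + e2 + (2*Real.cos (Real.pi/21))*h6 - h5
  have h8 : Real.cos (8*(Real.pi/21)) = (1 + (-32)*Real.cos (Real.pi/21)^2 + 160*Real.cos (Real.pi/21)^4 + (-256)*Real.cos (Real.pi/21)^6 + 128*Real.cos (Real.pi/21)^8) := by
    have e1 := Real.cos_add (7*(Real.pi/21)) (Real.pi/21)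
    have e2 := Real.cos_sub (7*(Real.pi/21)) (Real.pi/21)
    rw [show (7:ℝ)*(Real.pi/21) + Real.pi/21 = 8*(Real.pi/21) by ring] at e1
    rw [show (7:ℝ)*(Real.pi/21) - Real.pi/21 = 6*(Real.pi/21) by ring] at e2
    linear_combination e1 + e2 + (2*Real.cos (Real.pi/21))*h7 - h6
  have h9 : Real.cos (9*(Real.pi/21)) = (9*Real.cos (Real.pi/21) + (-120)*Real.cos (Real.pi/21)^3 + 432*Real.cos (Real.pi/21)^5 + (-576)*Real.cos (Real.pi/21)^7 + 256*Real.cos (Real.pi/21)^9) := by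
    have e1 := Real.cos_add (8*(Real.pi/21)) (Real.pi/21)
    have e2 := Real.cos_sub (8*(Real.pi/21)) (Real.pi/21)
    rw [show (8:ℝ)*(Real.pi/21) + Real.pi/21 = 9*(Real.pi/21) by ring] at e1
    rw [show (8:ℝ)*(Real.pi/21) - Real.pi/21 = 7*(Real.pi/21) by ring] at e2
    linear_combination e1 + e2 + (2*Real.cos (Real.pi/21))*h8 - h7
  have h10 : Real.cos (10*(Real.pi/21)) = ((-1) + 50*Real.cos (Real.pi/21)^2 + (-400)*Real.cos (Real.pi/21)^4 + 1120*Real.cos (Real.pi/21)^6 + (-1280)*Real.cos (Real.pi/21)^8 + 512*Real.cos (Real.pi/21)^10) := by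
    have e1 := Real.cos_add (9*(Real.pi/21)) (Real.pi/21)
    have e2 := Real.cos_sub (9*(Real.pi/21)) (Real.pi/21)
    rw [show (9:ℝ)*(Real.pi/21) + Real.pi/21 = 10*(Real.pi/21) by ring] at e1
    rw [show (9:ℝ)*(Real.pi/21) - Real.pi/21 = 8*(Real.pi/21) by ring] at e2
    linear_combination e1 + e2 + (2*Real.cos (Real.pi/21))*h9 - h8
  have h11 : Real.cos (11*(Real.pi/21)) = ((-11)*Real.cos (Real.pi/21) + 220*Real.cos (Real.pi/21)^3 + (-1232)*Real.cos (Real.pi/21)^5 + 2816*Real.cos (Real.pi/21)^7 + (-2816)*Real.cos (Real.pi/21)^9 + 1024*Real.cos (Real.pi/21)^11) := by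
    have e1 := Real.cos_add (10*(Real.pi/21)) (Real.pi/21)
    have e2 := Real.cos_sub (10*(Real.pi/21)) (Real.pi/21)
    rw [show (10:ℝ)*(Real.pi/21) + Real.pi/21 = 11*(Real.pi/21) by ring] at e1
    rw [show (10:ℝ)*(Real.pi/21) - Real.pi/21 = 9*(Real.pi/21) by ring] at e2
    linear_combination e1 + e2 + (2*Real.cos (Real.pi/21))*h10 - h9
  have h12 : Real.cos (12*(Real.pi/21)) = (1 + (-72)*Real.cos (Real.pi/21)^2 + 840*Real.cos (Real.pi/21)^4 + (-3584)*Real.cos (Real.pi/21)^6 + 6912*Real.cos (Real.pi/21)^8 + (-6144)*Real.cos (Real.pi/21)^10 + 2048*Real.cos (Real.pi/21)^12) := by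
    have e1 := Real.cos_add (11*(Real.pi/21)) (Real.pi/21)
    have e2 := Real.cos_sub (11*(Real.pi/21)) (Real.pi/21)
    rw [show (11:ℝ)*(Real.pi/21) + Real.pi/21 = 12*(Real.pi/21) by ring] at e1
    rw [show (11:ℝ)*(Real.pi/21) - Real.pi/21 = 10*(Real.pi/21) by ring] at e2
    linear_combination e1 + e2 + (2*Real.cos (Real.pi/21))*h11 - h10
  have h13 : Real.cos (13*(Real.pi/21)) = (13*Real.cos (Real.pi/21) + (-364)*Real.cos (Real.pi/21)^3 + 2912*Real.cos (Real.pi/21)^5 + (-9984)*Real.cos (Real.pi/21)^7 + 16640*Real.cos (Real.pi/21)^9 + (-13312)*Real.cos (Real.pi/21)^11 + 4096*Real.cos (Real.pi/21)^13) := by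
    have e1 := Real.cos_add (12*(Real.pi/21)) (Real.pi/21)
    have e2 := Real.cos_sub (12*(Real.pi/21)) (Real.pi/21)
    rw [show (12:ℝ)*(Real.pi/21) + Real.pi/21 = 13*(Real.pi/21) by ring] at e1
    rw [show (12:ℝ)*(Real.pi/21) - Real.pi/21 = 11*(Real.pi/21) by ring] at e2
    linear_combination e1 + e2 + (2*Real.cos (Real.pi/21))*h12 - h11
  have h14 : Real.cos (14*(Real.pi/21)) = ((-1) + 98*Real.cos (Real.pi/21)^2 + (-1568)*Real.cos (Real.pi/21)^4 + 9408*Real.cos (Real.pi/21)^6 + (-26880)*Real.cos (Real.pi/21)^8 + 39424*Real.cos (Real.pi/21)^10 + (-28672)*Real.cos (Real.pi/21)^12 + 8192*Real.cos (Real.pi/21)^14) := by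
    have e1 := Real.cos_add (13*(Real.pi/21)) (Real.pi/21)
    have e2 := Real.cos_sub (13*(Real.pi/21)) (Real.pi/21)
    rw [show (13:ℝ)*(Real.pi/21) + Real.pi/21 = 14*(Real.pi/21) by ring] at e1
    rw [show (13:ℝ)*(Real.pi/21) - Real.pi/21 = 12*(Real.pi/21) by ring] at e2
    linear_combination e1 + e2 + (2*Real.cos (Real.pi/21))*h13 - h12
  have h15 : Real.cos (15*(Real.pi/21)) = ((-15)*Real.cos (Real.pi/21) + 560*Real.cos (Real.pi/21)^3 + (-6048)*Real.cos (Real.pi/21)^5 + 28800*Real.cos (Real.pi/21)^7 + (-70400)*Real.cos (Real.pi/21)^9 + 92160*Real.cos (Real.pi/21)^11 + (-61440)*Real.cos (Real.pi/21)^13 + 16384*Real.cos (Real.pi/21)^15) := by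
    have e1 := Real.cos_add (14*(Real.pi/21)) (Real.pi/21)
    have e2 := Real.cos_sub (14*(Real.pi/21)) (Real.pi/21)
    rw [show (14:ℝ)*(Real.pi/21) + Real.pi/21 = 15*(Real.pi/21) by ring] at e1
    rw [show (14:ℝ)*(Real.pi/21) - Real.pi/21 = 13*(Real.pi/21) by ring] at e2
    linear_combination e1 + e2 + (2*Real.cos (Real.pi/21))*h14 - h13
  have h16 : Real.cos (16*(Real.pi/21)) = (1 + (-128)*Real.cos (Real.pi/21)^2 + 2688*Real.cos (Real.pi/21)^4 + (-21504)*Real.cos (Real.pi/21)^6 + 84480*Real.cos (Real.pi/21)^8 + (-180224)*Real.cos (Real.pi/21)^10 + 212992*Real.cos (Real.pi/21)^12 + (-131072)*Real.cos (Real.pi/21)^14 + 32768*Real.cos (Real.pi/21)^16) := by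
    have e1 := Real.cos_add (15*(Real.pi/21)) (Real.pi/21)
    have e2 := Real.cos_sub (15*(Real.pi/21)) (Real.pi/21)
    rw [show (15:ℝ)*(Real.pi/21) + Real.pi/21 = 16*(Real.pi/21) by ring] at e1
    rw [show (15:ℝ)*(Real.pi/21) - Real.pi/21 = 14*(Real.pi/21) by ring] at e2
    linear_combination e1 + e2 + (2*Real.cos (Real.pi/21))*h15 - h14
  have h17 : Real.cos (17*(Real.pi/21)) = (17*Real.cos (Real.pi/21) + (-816)*Real.cos (Real.pi/21)^3 + 11424*Real.cos (Real.pi/21)^5 + (-71808)*Real.cos (Real.pi/21)^7 + 239360*Real.cos (Real.pi/21)^9 + (-452608)*Real.cos (Real.pi/21)^11 + 487424*Real.cos (Real.pi/21)^13 + (-278528)*Real.cos (Real.pi/21)^15 + 65536*Real.cos (Real.pi/21)^17) := by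
    have e1 := Real.cos_add (16*(Real.pi/21)) (Real.pi/21)
    have e2 := Real.cos_sub (16*(Real.pi/21)) (Real.pi/21)
    rw [show (16:ℝ)*(Real.pi/21) + Real.pi/21 = 17*(Real.pi/21) by ring] at e1
    rw [show (16:ℝ)*(Real.pi/21) - Real.pi/21 = 15*(Real.pi/21) by ring] at e2
    linear_combination e1 + e2 + (2*Real.cos (Real.pi/21))*h16 - h15
  have h18 : Real.cos (18*(Real.pi/21)) = ((-1) + 162*Real.cos (Real.pi/21)^2 + (-4320)*Real.cos (Real.pi/21)^4 + 44352*Real.cos (Real.pi/21)^6 + (-228096)*Real.cos (Real.pi/21)^8 + 658944*Real.cos (Real.pi/21)^10 + (-1118208)*Real.cos (Real.pi/21)^12 + 1105920*Real.cos (Real.pi/21)^14 + (-589824)*Real.cos (Real.pi/21)^16 + 131072*Real.cos (Real.pi/21)^18) := by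
    have e1 := Real.cos_add (17*(Real.pi/21)) (Real.pi/21)
    have e2 := Real.cos_sub (17*(Real.pi/21)) (Real.pi/21)
    rw [show (17:ℝ)*(Real.pi/21) + Real.pi/21 = 18*(Real.pi/21) by ring] at e1
    rw [show (17:ℝ)*(Real.pi/21) - Real.pi/21 = 16*(Real.pi/21) by ring] at e2
    linear_combination e1 + e2 + (2*Real.cos (Real.pi/21))*h17 - h16
  have h19 : Real.cos (19*(Real.pi/21)) = ((-19)*Real.cos (Real.pi/21) + 1140*Real.cos (Real.pi/21)^3 + (-20064)*Real.cos (Real.pi/21)^5 + 160512*Real.cos (Real.pi/21)^7 + (-695552)*Real.cos (Real.pi/21)^9 + 1770496*Real.cos (Real.pi/21)^11 + (-2723840)*Real.cos (Real.pi/21)^13 + 2490368*Real.cos (Real.pi/21)^15 + (-1245184)*Real.cos (Real.pi/21)^17 + 262144*Real.cos (Real.pi/21)^19) := by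
    have e1 := Real.cos_add (18*(Real.pi/21)) (Real.pi/21)
    have e2 := Real.cos_sub (18*(Real.pi/21)) (Real.pi/21)
    rw [show (18:ℝ)*(Real.pi/21) + Real.pi/21 = 19*(Real.pi/21) by ring] at e1
    rw [show (18:ℝ)*(Real.pi/21) - Real.pi/21 = 17*(Real.pi/21) by ring] at e2
    linear_combination e1 + e2 + (2*Real.cos (Real.pi/21))*h18 - h17
  have h20 : Real.cos (20*(Real.pi/21)) = (1 + (-200)*Real.cos (Real.pi/21)^2 + 6600*Real.cos (Real.pi/21)^4 + (-84480)*Real.cos (Real.pi/21)^6 + 549120*Real.cos (Real.pi/21)^8 + (-2050048)*Real.cos (Real.pi/21)^10 + 4659200*Real.cos (Real.pi/21)^12 + (-6553600)*Real.cos (Real.pi/21)^14 + 5570560*Real.cos (Real.pi/21)^16 + (-2621440)*Real.cos (Real.pi/21)^18 + 524288*Real.cos (Real.pi/21)^20) := by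
    have e1 := Real.cos_add (19*(Real.pi/21)) (Real.pi/21)
    have e2 := Real.cos_sub (19*(Real.pi/21)) (Real.pi/21)
    rw [show (19:ℝ)*(Real.pi/21) + Real.pi/21 = 20*(Real.pi/21) by ring] at e1
    rw [show (19:ℝ)*(Real.pi/21) - Real.pi/21 = 18*(Real.pi/21) by ring] at e2
    linear_combination e1 + e2 + (2*Real.cos (Real.pi/21))*h19 - h18
  have h21 : Real.cos (21*(Real.pi/21)) = (21*Real.cos (Real.pi/21) + (-1540)*Real.cos (Real.pi/21)^3 + 33264*Real.cos (Real.pi/21)^5 + (-329472)*Real.cos (Real.pi/21)^7 + 1793792*Real.cos (Real.pi/21)^9 + (-5870592)*Real.cos (Real.pi/21)^11 + 12042240*Real.cos (Real.pi/21)^13 + (-15597568)*Real.cos (Real.pi/21)^15 + 12386304*Real.cos (Real.pi/21)^17 + (-5505024)*Real.cos (Real.pi/21)^19 + 1048576*Real.cos (Real.pi/21)^21) := by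
    have e1 := Real.cos_add (20*(Real.pi/21)) (Real.pi/21)
    have e2 := Real.cos_sub (20*(Real.pi/21)) (Real.pi/21)
    rw [show (20:ℝ)*(Real.pi/21) + Real.pi/21 = 21*(Real.pi/21) by ring] at e1
    rw [show (20:ℝ)*(Real.pi/21) - Real.pi/21 = 19*(Real.pi/21) by ring] at e2
    linear_combination e1 + e2 + (2*Real.cos (Real.pi/21))*h20 - h19
  rw [show (21:ℝ)*(Real.pi/21) = Real.pi by ring, Real.cos_pi] at h21
  have hfac : (Real.cos (Real.pi/21)+1) * (1024*(Real.cos (Real.pi/21)-1/2)*(((1/8) + (-1/2)*Real.cos (Real.pi/21) + (-1/2)*Real.cos (Real.pi/21)^2 + 1*Real.cos (Real.pi/21)^3))*(((1/64) + (1/4)*Real.cos (Real.pi/21) + (1/2)*Real.cos (Real.pi/21)^2 + (-3/4)*Real.cos (Real.pi/21)^3 + (-3/2)*Real.cos (Real.pi/21)^4 + (1/2)*Real.cos (Real.pi/21)^5 + 1*Real.cos (Real.pi/21)^6)))^2 = 0 := by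
    linear_combination -h21
  clear h2 h3 h4 h5 h6 h7 h8 h9 h10 h11 h12 h13 h14 h15 h16 h17 h18 h19 h20 h21
  have hlb := Gd_cos_lb
  have hub := Gd_cos_ub
  have hV : (1024*(Real.cos (Real.pi/21)-1/2)*(((1/8) + (-1/2)*Real.cos (Real.pi/21) + (-1/2)*Real.cos (Real.pi/21)^2 + 1*Real.cos (Real.pi/21)^3))*(((1/64) + (1/4)*Real.cos (Real.pi/21) + (1/2)*Real.cos (Real.pi/21)^2 + (-3/4)*Real.cos (Real.pi/21)^3 + (-3/2)*Real.cos (Real.pi/21)^4 + (1/2)*Real.cos (Real.pi/21)^5 + 1*Real.cos (Real.pi/21)^6))) = 0 := by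
    have h0 : (1024*(Real.cos (Real.pi/21)-1/2)*(((1/8) + (-1/2)*Real.cos (Real.pi/21) + (-1/2)*Real.cos (Real.pi/21)^2 + 1*Real.cos (Real.pi/21)^3))*(((1/64) + (1/4)*Real.cos (Real.pi/21) + (1/2)*Real.cos (Real.pi/21)^2 + (-3/4)*Real.cos (Real.pi/21)^3 + (-3/2)*Real.cos (Real.pi/21)^4 + (1/2)*Real.cos (Real.pi/21)^5 + 1*Real.cos (Real.pi/21)^6)))^2 = 0 := by
      rcases mul_eq_zero.mp hfac with h | h
      · linarith
      · exact h
    exact pow_eq_zero_iff (by norm_num) |>.mp h0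
  have hm3 : (0:ℝ) < ((1/8) + (-1/2)*Real.cos (Real.pi/21) + (-1/2)*Real.cos (Real.pi/21)^2 + 1*Real.cos (Real.pi/21)^3) := by nlinarith
  rcases mul_eq_zero.mp hV with h | h
  · rcases mul_eq_zero.mp h with h' | h'
    · rcases mul_eq_zero.mp h' with h'' | h''
      · norm_num at h''
      · linarith
    · linarith
  · linear_combination 64*h

private lemma Gd_sin2 : Real.sin (2*(Real.pi/21)) = Real.sin (Real.pi/21) * (2*Real.cos (Real.pi/21)) := by
  rw [Real.sin_two_mul]; ring
private lemma Gd_sin3 : Real.sin (3*(Real.pi/21)) = Real.sin (Real.pi/21) * ((-1) + 4*Real.cos (Real.pi/21)^2) := by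
  have e1 := Real.sin_add (2*(Real.pi/21)) (Real.pi/21)
  have e2 := Real.sin_sub (2*(Real.pi/21)) (Real.pi/21)
  rw [show (2:ℝ)*(Real.pi/21) + Real.pi/21 = 3*(Real.pi/21) by ring] at e1
  rw [show (2:ℝ)*(Real.pi/21) - Real.pi/21 = (Real.pi/21) by ring] at e2
  linear_combination e1 + e2 + (2*Real.cos (Real.pi/21))*Gd_sin2
private lemma Gd_sin4 : Real.sin (4*(Real.pi/21)) = Real.sin (Real.pi/21) * ((-4)*Real.cos (Real.pi/21) + 8*Real.cos (Real.pi/21)^3) := by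
  have e1 := Real.sin_add (3*(Real.pi/21)) (Real.pi/21)
  have e2 := Real.sin_sub (3*(Real.pi/21)) (Real.pi/21)
  rw [show (3:ℝ)*(Real.pi/21) + Real.pi/21 = 4*(Real.pi/21) by ring] at e1
  rw [show (3:ℝ)*(Real.pi/21) - Real.pi/21 = 2*(Real.pi/21) by ring] at e2
  linear_combination e1 + e2 + (2*Real.cos (Real.pi/21))*Gd_sin3 - Gd_sin2
private lemma Gd_sin5 : Real.sin (5*(Real.pi/21)) = Real.sin (Real.pi/21) * (1 + (-12)*Real.cos (Real.pi/21)^2 + 16*Real.cos (Real.pi/21)^4) := by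
  have e1 := Real.sin_add (4*(Real.pi/21)) (Real.pi/21)
  have e2 := Real.sin_sub (4*(Real.pi/21)) (Real.pi/21)
  rw [show (4:ℝ)*(Real.pi/21) + Real.pi/21 = 5*(Real.pi/21) by ring] at e1
  rw [show (4:ℝ)*(Real.pi/21) - Real.pi/21 = 3*(Real.pi/21) by ring] at e2
  linear_combination e1 + e2 + (2*Real.cos (Real.pi/21))*Gd_sin4 - Gd_sin3
private lemma Gd_sin6 : Real.sin (6*(Real.pi/21)) = Real.sin (Real.pi/21) * (6*Real.cos (Real.pi/21) + (-32)*Real.cos (Real.pi/21)^3 + 32*Real.cos (Real.pi/21)^5) := by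
  have e1 := Real.sin_add (5*(Real.pi/21)) (Real.pi/21)
  have e2 := Real.sin_sub (5*(Real.pi/21)) (Real.pi/21)
  rw [show (5:ℝ)*(Real.pi/21) + Real.pi/21 = 6*(Real.pi/21) by ring] at e1
  rw [show (5:ℝ)*(Real.pi/21) - Real.pi/21 = 4*(Real.pi/21) by ring] at e2
  linear_combination e1 + e2 + (2*Real.cos (Real.pi/21))*Gd_sin5 - Gd_sin4
private lemma Gd_sin7 : Real.sin (7*(Real.pi/21)) = Real.sin (Real.pi/21) * ((-2) + (-16)*Real.cos (Real.pi/21) + (-8)*Real.cos (Real.pi/21)^2 + 48*Real.cos (Real.pi/21)^3 + 16*Real.cos (Real.pi/21)^4 + (-32)*Real.cos (Real.pi/21)^5) := by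
  have e1 := Real.sin_add (6*(Real.pi/21)) (Real.pi/21)
  have e2 := Real.sin_sub (6*(Real.pi/21)) (Real.pi/21)
  rw [show (6:ℝ)*(Real.pi/21) + Real.pi/21 = 7*(Real.pi/21) by ring] at e1
  rw [show (6:ℝ)*(Real.pi/21) - Real.pi/21 = 5*(Real.pi/21) by ring] at e2
  linear_combination e1 + e2 + (2*Real.cos (Real.pi/21))*Gd_sin6 - Gd_sin5 + (1*Real.sin (Real.pi/21))*Gd_m6
private lemma Gd_sin8 : Real.sin (8*(Real.pi/21)) = Real.sin (Real.pi/21) * (1 + 6*Real.cos (Real.pi/21) + (-32)*Real.cos (Real.pi/21)^3 + 32*Real.cos (Real.pi/21)^5) := by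
  have e1 := Real.sin_add (7*(Real.pi/21)) (Real.pi/21)
  have e2 := Real.sin_sub (7*(Real.pi/21)) (Real.pi/21)
  rw [show (7:ℝ)*(Real.pi/21) + Real.pi/21 = 8*(Real.pi/21) by ring] at e1
  rw [show (7:ℝ)*(Real.pi/21) - Real.pi/21 = 6*(Real.pi/21) by ring] at e2
  linear_combination e1 + e2 + (2*Real.cos (Real.pi/21))*Gd_sin7 - Gd_sin6 + ((-1)*Real.sin (Real.pi/21))*Gd_m6
private lemma Gd_sin9 : Real.sin (9*(Real.pi/21)) = Real.sin (Real.pi/21) * (1 + 2*Real.cos (Real.pi/21) + (-12)*Real.cos (Real.pi/21)^2 + 16*Real.cos (Real.pi/21)^4) := by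
  have e1 := Real.sin_add (8*(Real.pi/21)) (Real.pi/21)
  have e2 := Real.sin_sub (8*(Real.pi/21)) (Real.pi/21)
  rw [show (8:ℝ)*(Real.pi/21) + Real.pi/21 = 9*(Real.pi/21) by ring] at e1
  rw [show (8:ℝ)*(Real.pi/21) - Real.pi/21 = 7*(Real.pi/21) by ring] at e2
  linear_combination e1 + e2 + (2*Real.cos (Real.pi/21))*Gd_sin8 - Gd_sin7 + (1*Real.sin (Real.pi/21))*Gd_m6
private lemma Gd_sin10 : Real.sin (10*(Real.pi/21)) = Real.sin (Real.pi/21) * ((-1) + (-4)*Real.cos (Real.pi/21) + 4*Real.cos (Real.pi/21)^2 + 8*Real.cos (Real.pi/21)^3) := by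
  have e1 := Real.sin_add (9*(Real.pi/21)) (Real.pi/21)
  have e2 := Real.sin_sub (9*(Real.pi/21)) (Real.pi/21)
  rw [show (9:ℝ)*(Real.pi/21) + Real.pi/21 = 10*(Real.pi/21) by ring] at e1
  rw [show (9:ℝ)*(Real.pi/21) - Real.pi/21 = 8*(Real.pi/21) by ring] at e2
  linear_combination e1 + e2 + (2*Real.cos (Real.pi/21))*Gd_sin9 - Gd_sin8
private lemma Gd_sin11 : Real.sin (11*(Real.pi/21)) = Real.sin (Real.pi/21) * ((-1) + (-4)*Real.cos (Real.pi/21) + 4*Real.cos (Real.pi/21)^2 + 8*Real.cos (Real.pi/21)^3) := by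
  rw [show (11:ℝ)*(Real.pi/21) = Real.pi - 10*(Real.pi/21) by ring, Real.sin_pi_sub]
  exact Gd_sin10
private lemma Gd_sin12 : Real.sin (12*(Real.pi/21)) = Real.sin (Real.pi/21) * (1 + 2*Real.cos (Real.pi/21) + (-12)*Real.cos (Real.pi/21)^2 + 16*Real.cos (Real.pi/21)^4) := by
  rw [show (12:ℝ)*(Real.pi/21) = Real.pi - 9*(Real.pi/21) by ring, Real.sin_pi_sub]
  exact Gd_sin9
private lemma Gd_sin15 : Real.sin (15*(Real.pi/21)) = Real.sin (Real.pi/21) * (6*Real.cos (Real.pi/21) + (-32)*Real.cos (Real.pi/21)^3 + 32*Real.cos (Real.pi/21)^5) := by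
  rw [show (15:ℝ)*(Real.pi/21) = Real.pi - 6*(Real.pi/21) by ring, Real.sin_pi_sub]
  exact Gd_sin6
private lemma Gd_sin18 : Real.sin (18*(Real.pi/21)) = Real.sin (Real.pi/21) * ((-1) + 4*Real.cos (Real.pi/21)^2) := by
  rw [show (18:ℝ)*(Real.pi/21) = Real.pi - 3*(Real.pi/21) by ring, Real.sin_pi_sub]
  exact Gd_sin3
private lemma Gd_spos : ∀ k : ℝ, 0 < k → k ≤ 20 → 0 < Real.sin (k*(Real.pi/21)) := by
  intro k h1 h2
  have hp := Real.pi_pos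
  apply Real.sin_pos_of_pos_of_lt_pi
  · positivity
  · nlinarith
private lemma Gd_pos1 : 0 < Real.sin (Real.pi/21) := by
  have := Gd_spos 1 (by norm_num) (by norm_num)
  rwa [show (1:ℝ)*(Real.pi/21) = Real.pi/21 by ring] at this
private lemma Gd_rpos2 : 0 < (2*Real.cos (Real.pi/21)) := by
  have h1 := Gd_spos 2 (by norm_num) (by norm_num)
  rw [Gd_sin2] at h1
  nlinarith [Gd_pos1]
private lemma Gd_rpos3 : 0 < ((-1) + 4*Real.cos (Real.pi/21)^2) := by
  have h1 := Gd_spos 3 (by norm_num) (by norm_num)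
  rw [Gd_sin3] at h1
  nlinarith [Gd_pos1]
private lemma Gd_rpos4 : 0 < ((-4)*Real.cos (Real.pi/21) + 8*Real.cos (Real.pi/21)^3) := by
  have h1 := Gd_spos 4 (by norm_num) (by norm_num)
  rw [Gd_sin4] at h1
  nlinarith [Gd_pos1]
private lemma Gd_rpos5 : 0 < (1 + (-12)*Real.cos (Real.pi/21)^2 + 16*Real.cos (Real.pi/21)^4) := by
  have h1 := Gd_spos 5 (by norm_num) (by norm_num)
  rw [Gd_sin5] at h1
  nlinarith [Gd_pos1]
private lemma Gd_rpos6 : 0 < (6*Real.cos (Real.pi/21) + (-32)*Real.cos (Real.pi/21)^3 + 32*Real.cos (Real.pi/21)^5) := by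
  have h1 := Gd_spos 6 (by norm_num) (by norm_num)
  rw [Gd_sin6] at h1
  nlinarith [Gd_pos1]
private lemma Gd_rpos7 : 0 < ((-2) + (-16)*Real.cos (Real.pi/21) + (-8)*Real.cos (Real.pi/21)^2 + 48*Real.cos (Real.pi/21)^3 + 16*Real.cos (Real.pi/21)^4 + (-32)*Real.cos (Real.pi/21)^5) := by
  have h1 := Gd_spos 7 (by norm_num) (by norm_num)
  rw [Gd_sin7] at h1
  nlinarith [Gd_pos1]
private lemma Gd_rpos8 : 0 < (1 + 6*Real.cos (Real.pi/21) + (-32)*Real.cos (Real.pi/21)^3 + 32*Real.cos (Real.pi/21)^5) := by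
  have h1 := Gd_spos 8 (by norm_num) (by norm_num)
  rw [Gd_sin8] at h1
  nlinarith [Gd_pos1]
private lemma Gd_rpos9 : 0 < (1 + 2*Real.cos (Real.pi/21) + (-12)*Real.cos (Real.pi/21)^2 + 16*Real.cos (Real.pi/21)^4) := by
  have h1 := Gd_spos 9 (by norm_num) (by norm_num)
  rw [Gd_sin9] at h1
  nlinarith [Gd_pos1]
private lemma Gd_rpos10 : 0 < ((-1) + (-4)*Real.cos (Real.pi/21) + 4*Real.cos (Real.pi/21)^2 + 8*Real.cos (Real.pi/21)^3) := by
  have h1 := Gd_spos 10 (by norm_num) (by norm_num)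
  rw [Gd_sin10] at h1
  nlinarith [Gd_pos1]
private lemma Gd_qn_1_3 : qnum 7 (1/3) = (1) / ((-1) + 4*Real.cos (Real.pi/21)^2) := by
  unfold qnum
  rw [show Real.pi * (1/3) / 7 = Real.pi/21 by ring, show Real.pi / 7 = 3*(Real.pi/21) by ring]
  rw [Gd_sin3]
  rw [show Real.sin (Real.pi/21) / (Real.sin (Real.pi/21) * ((-1) + 4*Real.cos (Real.pi/21)^2)) = Real.sin (Real.pi/21)*1 / (Real.sin (Real.pi/21) * ((-1) + 4*Real.cos (Real.pi/21)^2)) by rw [mul_one], mul_div_mul_left _ _ (ne_of_gt Gd_pos1)]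
private lemma Gd_qn_2_3 : qnum 7 (2/3) = (2*Real.cos (Real.pi/21)) / ((-1) + 4*Real.cos (Real.pi/21)^2) := by
  unfold qnum
  rw [show Real.pi * (2/3) / 7 = 2*(Real.pi/21) by ring, show Real.pi / 7 = 3*(Real.pi/21) by ring]
  rw [Gd_sin2, Gd_sin3, mul_div_mul_left _ _ (ne_of_gt Gd_pos1)]
private lemma Gd_qn_1_1 : qnum 7 (1) = ((-1) + 4*Real.cos (Real.pi/21)^2) / ((-1) + 4*Real.cos (Real.pi/21)^2) := by
  unfold qnum
  rw [show Real.pi * (1) / 7 = 3*(Real.pi/21) by ring, show Real.pi / 7 = 3*(Real.pi/21) by ring]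
  rw [Gd_sin3, mul_div_mul_left _ _ (ne_of_gt Gd_pos1)]
private lemma Gd_qn_4_3 : qnum 7 (4/3) = ((-4)*Real.cos (Real.pi/21) + 8*Real.cos (Real.pi/21)^3) / ((-1) + 4*Real.cos (Real.pi/21)^2) := by
  unfold qnum
  rw [show Real.pi * (4/3) / 7 = 4*(Real.pi/21) by ring, show Real.pi / 7 = 3*(Real.pi/21) by ring]
  rw [Gd_sin4, Gd_sin3, mul_div_mul_left _ _ (ne_of_gt Gd_pos1)]
private lemma Gd_qn_5_3 : qnum 7 (5/3) = (1 + (-12)*Real.cos (Real.pi/21)^2 + 16*Real.cos (Real.pi/21)^4) / ((-1) + 4*Real.cos (Real.pi/21)^2) := by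
  unfold qnum
  rw [show Real.pi * (5/3) / 7 = 5*(Real.pi/21) by ring, show Real.pi / 7 = 3*(Real.pi/21) by ring]
  rw [Gd_sin5, Gd_sin3, mul_div_mul_left _ _ (ne_of_gt Gd_pos1)]
private lemma Gd_qn_2_1 : qnum 7 (2) = (6*Real.cos (Real.pi/21) + (-32)*Real.cos (Real.pi/21)^3 + 32*Real.cos (Real.pi/21)^5) / ((-1) + 4*Real.cos (Real.pi/21)^2) := by
  unfold qnum
  rw [show Real.pi * (2) / 7 = 6*(Real.pi/21) by ring, show Real.pi / 7 = 3*(Real.pi/21) by ring]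
  rw [Gd_sin6, Gd_sin3, mul_div_mul_left _ _ (ne_of_gt Gd_pos1)]
private lemma Gd_qn_7_3 : qnum 7 (7/3) = ((-2) + (-16)*Real.cos (Real.pi/21) + (-8)*Real.cos (Real.pi/21)^2 + 48*Real.cos (Real.pi/21)^3 + 16*Real.cos (Real.pi/21)^4 + (-32)*Real.cos (Real.pi/21)^5) / ((-1) + 4*Real.cos (Real.pi/21)^2) := by
  unfold qnum
  rw [show Real.pi * (7/3) / 7 = 7*(Real.pi/21) by ring, show Real.pi / 7 = 3*(Real.pi/21) by ring]
  rw [Gd_sin7, Gd_sin3, mul_div_mul_left _ _ (ne_of_gt Gd_pos1)]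
private lemma Gd_qn_8_3 : qnum 7 (8/3) = (1 + 6*Real.cos (Real.pi/21) + (-32)*Real.cos (Real.pi/21)^3 + 32*Real.cos (Real.pi/21)^5) / ((-1) + 4*Real.cos (Real.pi/21)^2) := by
  unfold qnum
  rw [show Real.pi * (8/3) / 7 = 8*(Real.pi/21) by ring, show Real.pi / 7 = 3*(Real.pi/21) by ring]
  rw [Gd_sin8, Gd_sin3, mul_div_mul_left _ _ (ne_of_gt Gd_pos1)]
private lemma Gd_qn_3_1 : qnum 7 (3) = (1 + 2*Real.cos (Real.pi/21) + (-12)*Real.cos (Real.pi/21)^2 + 16*Real.cos (Real.pi/21)^4) / ((-1) + 4*Real.cos (Real.pi/21)^2) := by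
  unfold qnum
  rw [show Real.pi * (3) / 7 = 9*(Real.pi/21) by ring, show Real.pi / 7 = 3*(Real.pi/21) by ring]
  rw [Gd_sin9, Gd_sin3, mul_div_mul_left _ _ (ne_of_gt Gd_pos1)]
private lemma Gd_qn_10_3 : qnum 7 (10/3) = ((-1) + (-4)*Real.cos (Real.pi/21) + 4*Real.cos (Real.pi/21)^2 + 8*Real.cos (Real.pi/21)^3) / ((-1) + 4*Real.cos (Real.pi/21)^2) := by
  unfold qnum
  rw [show Real.pi * (10/3) / 7 = 10*(Real.pi/21) by ring, show Real.pi / 7 = 3*(Real.pi/21) by ring]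
  rw [Gd_sin10, Gd_sin3, mul_div_mul_left _ _ (ne_of_gt Gd_pos1)]
private lemma Gd_qn_11_3 : qnum 7 (11/3) = ((-1) + (-4)*Real.cos (Real.pi/21) + 4*Real.cos (Real.pi/21)^2 + 8*Real.cos (Real.pi/21)^3) / ((-1) + 4*Real.cos (Real.pi/21)^2) := by
  unfold qnum
  rw [show Real.pi * (11/3) / 7 = 11*(Real.pi/21) by ring, show Real.pi / 7 = 3*(Real.pi/21) by ring]
  rw [Gd_sin11, Gd_sin3, mul_div_mul_left _ _ (ne_of_gt Gd_pos1)]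
private lemma Gd_qn_4_1 : qnum 7 (4) = (1 + 2*Real.cos (Real.pi/21) + (-12)*Real.cos (Real.pi/21)^2 + 16*Real.cos (Real.pi/21)^4) / ((-1) + 4*Real.cos (Real.pi/21)^2) := by
  unfold qnum
  rw [show Real.pi * (4) / 7 = 12*(Real.pi/21) by ring, show Real.pi / 7 = 3*(Real.pi/21) by ring]
  rw [Gd_sin12, Gd_sin3, mul_div_mul_left _ _ (ne_of_gt Gd_pos1)]
private lemma Gd_qn_5_1 : qnum 7 (5) = (6*Real.cos (Real.pi/21) + (-32)*Real.cos (Real.pi/21)^3 + 32*Real.cos (Real.pi/21)^5) / ((-1) + 4*Real.cos (Real.pi/21)^2) := by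
  unfold qnum
  rw [show Real.pi * (5) / 7 = 15*(Real.pi/21) by ring, show Real.pi / 7 = 3*(Real.pi/21) by ring]
  rw [Gd_sin15, Gd_sin3, mul_div_mul_left _ _ (ne_of_gt Gd_pos1)]
private lemma Gd_qn_6_1 : qnum 7 (6) = ((-1) + 4*Real.cos (Real.pi/21)^2) / ((-1) + 4*Real.cos (Real.pi/21)^2) := by
  unfold qnum
  rw [show Real.pi * (6) / 7 = 18*(Real.pi/21) by ring, show Real.pi / 7 = 3*(Real.pi/21) by ring]
  rw [Gd_sin18, Gd_sin3, mul_div_mul_left _ _ (ne_of_gt Gd_pos1)]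
private lemma Gd_ratio {b a1 a2 a3 a4 a5 a6 c1 c2 c3 c4 c5 c6 : ℝ} (hb : b ≠ 0)
    (h1 : c1 ≠ 0) (h2 : c2 ≠ 0) (h3 : c3 ≠ 0) (h4 : c4 ≠ 0) (h5 : c5 ≠ 0) (h6 : c6 ≠ 0) :
    a1/b * (a2/b) * (a3/b) * (a4/b) * (a5/b) * (a6/b) / (c1/b * (c2/b) * (c3/b) * (c4/b) * (c5/b) * (c6/b))
      = a1*a2*a3*a4*a5*a6 / (c1*c2*c3*c4*c5*c6) := by
  field_simp
private lemma Gd_w00 : qdimG2 0 0 = (((-1) + 4*Real.cos (Real.pi/21)^2) * ((-4)*Real.cos (Real.pi/21) + 8*Real.cos (Real.pi/21)^3) * (1 + (-12)*Real.cos (Real.pi/21)^2 + 16*Real.cos (Real.pi/21)^4) * (6*Real.cos (Real.pi/21) + (-32)*Real.cos (Real.pi/21)^3 + 32*Real.cos (Real.pi/21)^5) * (1 + 2*Real.cos (Real.pi/21) + (-12)*Real.cos (Real.pi/21)^2 + 16*Real.cos (Real.pi/21)^4)) / (((-1) + 4*Real.cos (Real.pi/21)^2) * ((-4)*Real.cos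 (Real.pi/21) + 8*Real.cos (Real.pi/21)^3) * (1 + (-12)*Real.cos (Real.pi/21)^2 + 16*Real.cos (Real.pi/21)^4) * (6*Real.cos (Real.pi/21) + (-32)*Real.cos (Real.pi/21)^3 + 32*Real.cos (Real.pi/21)^5) * (1 + 2*Real.cos (Real.pi/21) + (-12)*Real.cos (Real.pi/21)^2 + 16*Real.cos (Real.pi/21)^4)) := by
  have h0 : qdimG2 0 0 = qnum 7 (1) * qnum 7 (1/3) * qnum 7 (4/3) * qnum 7 (5/3) * qnum 7 (2) * qnum 7 (3) / (qnum 7 (1/3) * qnum 7 (1) * qnum 7 (4/3) * qnum 7 (5/3) * qnum 7 (2) * qnum 7 (3)) := by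
    unfold qdimG2; norm_num
  rw [h0]
  rw [Gd_qn_1_1, Gd_qn_1_3, Gd_qn_4_3, Gd_qn_5_3, Gd_qn_2_1, Gd_qn_3_1]
  rw [Gd_ratio (ne_of_gt Gd_rpos3) one_ne_zero (ne_of_gt Gd_rpos3) (ne_of_gt Gd_rpos4) (ne_of_gt Gd_rpos5) (ne_of_gt Gd_rpos6) (ne_of_gt Gd_rpos9)]
  ring
private lemma Gd_w01 : qdimG2 0 1 = (((-1) + 4*Real.cos (Real.pi/21)^2) * (2*Real.cos (Real.pi/21)) * (1 + (-12)*Real.cos (Real.pi/21)^2 + 16*Real.cos (Real.pi/21)^4) * ((-2) + (-16)*Real.cos (Real.pi/21) + (-8)*Real.cos (Real.pi/21)^2 + 48*Real.cos (Real.pi/21)^3 + 16*Real.cos (Real.pi/21)^4 + (-32)*Real.cos (Real.pi/21)^5) * (1 + 2*Real.cos (Real.pi/21) + (-12)*Real.cos (Real.pi/21)^2 + 16*Real.cos (Real.pi/21)^4) * (1 + 2*Real.cos (Real.pi/21) + (-12)*Real.cos (Real.pi/21)^2 + 16*Real.cos (Real.pi/21)^4)) / (((-1) + 4*Real.cos (Real.pi/21)^2)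 * ((-4)*Real.cos (Real.pi/21) + 8*Real.cos (Real.pi/21)^3) * (1 + (-12)*Real.cos (Real.pi/21)^2 + 16*Real.cos (Real.pi/21)^4) * (6*Real.cos (Real.pi/21) + (-32)*Real.cos (Real.pi/21)^3 + 32*Real.cos (Real.pi/21)^5) * (1 + 2*Real.cos (Real.pi/21) + (-12)*Real.cos (Real.pi/21)^2 + 16*Real.cos (Real.pi/21)^4)) := by
  have h0 : qdimG2 0 1 = qnum 7 (1) * qnum 7 (2/3) * qnum 7 (5/3) * qnum 7 (7/3) * qnum 7 (3) * qnum 7 (4) / (qnum 7 (1/3) * qnum 7 (1) * qnum 7 (4/3) * qnum 7 (5/3) * qnum 7 (2) * qnum 7 (3)) := by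
    unfold qdimG2; norm_num
  rw [h0]
  rw [Gd_qn_1_1, Gd_qn_2_3, Gd_qn_5_3, Gd_qn_7_3, Gd_qn_3_1, Gd_qn_4_1, Gd_qn_1_3, Gd_qn_4_3, Gd_qn_2_1]
  rw [Gd_ratio (ne_of_gt Gd_rpos3) one_ne_zero (ne_of_gt Gd_rpos3) (ne_of_gt Gd_rpos4) (ne_of_gt Gd_rpos5) (ne_of_gt Gd_rpos6) (ne_of_gt Gd_rpos9)]
  ring
private lemma Gd_w02 : qdimG2 0 2 = (((-1) + 4*Real.cos (Real.pi/21)^2) * ((-1) + 4*Real.cos (Real.pi/21)^2) * (6*Real.cos (Real.pi/21) + (-32)*Real.cos (Real.pi/21)^3 + 32*Real.cos (Real.pi/21)^5) * (1 + 2*Real.cos (Real.pi/21) + (-12)*Real.cos (Real.pi/21)^2 + 16*Real.cos (Real.pi/21)^4) * (1 + 2*Real.cos (Real.pi/21) + (-12)*Real.cos (Real.pi/21)^2 + 16*Real.cos (Real.pi/21)^4) * (6*Real.cos (Real.pi/21) + (-32)*Real.cos (Real.pi/21)^3 + 32*Real.cos (Real.pi/21)^5)) / (((-1) + 4*Real.cos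 (Real.pi/21)^2) * ((-4)*Real.cos (Real.pi/21) + 8*Real.cos (Real.pi/21)^3) * (1 + (-12)*Real.cos (Real.pi/21)^2 + 16*Real.cos (Real.pi/21)^4) * (6*Real.cos (Real.pi/21) + (-32)*Real.cos (Real.pi/21)^3 + 32*Real.cos (Real.pi/21)^5) * (1 + 2*Real.cos (Real.pi/21) + (-12)*Real.cos (Real.pi/21)^2 + 16*Real.cos (Real.pi/21)^4)) := by
  have h0 : qdimG2 0 2 = qnum 7 (1) * qnum 7 (1) * qnum 7 (2) * qnum 7 (3) * qnum 7 (4) * qnum 7 (5) / (qnum 7 (1/3) * qnum 7 (1) * qnum 7 (4/3) * qnum 7 (5/3) * qnum 7 (2) * qnum 7 (3)) := by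
    unfold qdimG2; norm_num
  rw [h0]
  rw [Gd_qn_1_1, Gd_qn_2_1, Gd_qn_3_1, Gd_qn_4_1, Gd_qn_5_1, Gd_qn_1_3, Gd_qn_4_3, Gd_qn_5_3]
  rw [Gd_ratio (ne_of_gt Gd_rpos3) one_ne_zero (ne_of_gt Gd_rpos3) (ne_of_gt Gd_rpos4) (ne_of_gt Gd_rpos5) (ne_of_gt Gd_rpos6) (ne_of_gt Gd_rpos9)]
  ring
private lemma Gd_w03 : qdimG2 0 3 = (((-1) + 4*Real.cos (Real.pi/21)^2) * ((-4)*Real.cos (Real.pi/21) + 8*Real.cos (Real.pi/21)^3) * ((-2) + (-16)*Real.cos (Real.pi/21) + (-8)*Real.cos (Real.pi/21)^2 + 48*Real.cos (Real.pi/21)^3 + 16*Real.cos (Real.pi/21)^4 + (-32)*Real.cos (Real.pi/21)^5) * ((-1) + (-4)*Real.cos (Real.pi/21) + 4*Real.cos (Real.pi/21)^2 + 8*Real.cos (Real.pi/21)^3) * (6*Real.cos (Real.pi/21) + (-32)*Real.cos (Real.pi/21)^3 + 32*Real.cos (Real.pi/21)^5) * ((-1) + 4*Real.cos (Real.pi/21)^2))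 / (((-1) + 4*Real.cos (Real.pi/21)^2) * ((-4)*Real.cos (Real.pi/21) + 8*Real.cos (Real.pi/21)^3) * (1 + (-12)*Real.cos (Real.pi/21)^2 + 16*Real.cos (Real.pi/21)^4) * (6*Real.cos (Real.pi/21) + (-32)*Real.cos (Real.pi/21)^3 + 32*Real.cos (Real.pi/21)^5) * (1 + 2*Real.cos (Real.pi/21) + (-12)*Real.cos (Real.pi/21)^2 + 16*Real.cos (Real.pi/21)^4)) := by
  have h0 : qdimG2 0 3 = qnum 7 (1) * qnum 7 (4/3) * qnum 7 (7/3) * qnum 7 (11/3) * qnum 7 (5) * qnum 7 (6) / (qnum 7 (1/3) * qnum 7 (1) * qnum 7 (4/3) * qnum 7 (5/3) * qnum 7 (2) * qnum 7 (3)) := by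
    unfold qdimG2; norm_num
  rw [h0]
  rw [Gd_qn_1_1, Gd_qn_4_3, Gd_qn_7_3, Gd_qn_11_3, Gd_qn_5_1, Gd_qn_6_1, Gd_qn_1_3, Gd_qn_5_3, Gd_qn_2_1, Gd_qn_3_1]
  rw [Gd_ratio (ne_of_gt Gd_rpos3) one_ne_zero (ne_of_gt Gd_rpos3) (ne_of_gt Gd_rpos4) (ne_of_gt Gd_rpos5) (ne_of_gt Gd_rpos6) (ne_of_gt Gd_rpos9)]
  ring
private lemma Gd_w10 : qdimG2 1 0 = ((6*Real.cos (Real.pi/21) + (-32)*Real.cos (Real.pi/21)^3 + 32*Real.cos (Real.pi/21)^5) * ((-2) + (-16)*Real.cos (Real.pi/21) + (-8)*Real.cos (Real.pi/21)^2 + 48*Real.cos (Real.pi/21)^3 + 16*Real.cos (Real.pi/21)^4 + (-32)*Real.cos (Real.pi/21)^5) * (1 + 6*Real.cos (Real.pi/21) + (-32)*Real.cos (Real.pi/21)^3 + 32*Real.cos (Real.pi/21)^5) * (1 + 2*Real.cos (Real.pi/21) + (-12)*Real.cos (Real.pi/21)^2 + 16*Real.cos (Real.pi/21)^4) * (6*Real.cos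 (Real.pi/21) + (-32)*Real.cos (Real.pi/21)^3 + 32*Real.cos (Real.pi/21)^5)) / (((-1) + 4*Real.cos (Real.pi/21)^2) * ((-4)*Real.cos (Real.pi/21) + 8*Real.cos (Real.pi/21)^3) * (1 + (-12)*Real.cos (Real.pi/21)^2 + 16*Real.cos (Real.pi/21)^4) * (6*Real.cos (Real.pi/21) + (-32)*Real.cos (Real.pi/21)^3 + 32*Real.cos (Real.pi/21)^5) * (1 + 2*Real.cos (Real.pi/21) + (-12)*Real.cos (Real.pi/21)^2 + 16*Real.cos (Real.pi/21)^4)) := by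
  have h0 : qdimG2 1 0 = qnum 7 (2) * qnum 7 (1/3) * qnum 7 (7/3) * qnum 7 (8/3) * qnum 7 (3) * qnum 7 (5) / (qnum 7 (1/3) * qnum 7 (1) * qnum 7 (4/3) * qnum 7 (5/3) * qnum 7 (2) * qnum 7 (3)) := by
    unfold qdimG2; norm_num
  rw [h0]
  rw [Gd_qn_2_1, Gd_qn_1_3, Gd_qn_7_3, Gd_qn_8_3, Gd_qn_3_1, Gd_qn_5_1, Gd_qn_1_1, Gd_qn_4_3, Gd_qn_5_3]
  rw [Gd_ratio (ne_of_gt Gd_rpos3) one_ne_zero (ne_of_gt Gd_rpos3) (ne_of_gt Gd_rpos4) (ne_of_gt Gd_rpos5) (ne_of_gt Gd_rpos6) (ne_of_gt Gd_rpos9)]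
  ring
private lemma Gd_w11 : qdimG2 1 1 = ((6*Real.cos (Real.pi/21) + (-32)*Real.cos (Real.pi/21)^3 + 32*Real.cos (Real.pi/21)^5) * (2*Real.cos (Real.pi/21)) * (1 + 6*Real.cos (Real.pi/21) + (-32)*Real.cos (Real.pi/21)^3 + 32*Real.cos (Real.pi/21)^5) * ((-1) + (-4)*Real.cos (Real.pi/21) + 4*Real.cos (Real.pi/21)^2 + 8*Real.cos (Real.pi/21)^3) * (1 + 2*Real.cos (Real.pi/21) + (-12)*Real.cos (Real.pi/21)^2 + 16*Real.cos (Real.pi/21)^4) * ((-1) + 4*Real.cos (Real.pi/21)^2)) / (((-1) + 4*Real.cos (Real.pi/21)^2) * ((-4)*Real.cos (Real.pi/21) + 8*Real.cos (Real.pi/21)^3) * (1 + (-12)*Real.cos (Real.pi/21)^2 + 16*Real.cos (Real.pi/21)^4) * (6*Real.cos (Real.pi/21) + (-32)*Real.cos (Real.pi/21)^3 + 32*Real.cos (Real.pi/21)^5) * (1 + 2*Real.cos (Real.pi/21) + (-12)*Real.cos (Real.pi/21)^2 + 16*Real.cos (Real.pi/21)^4)) := by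
  have h0 : qdimG2 1 1 = qnum 7 (2) * qnum 7 (2/3) * qnum 7 (8/3) * qnum 7 (10/3) * qnum 7 (4) * qnum 7 (6) / (qnum 7 (1/3) * qnum 7 (1) * qnum 7 (4/3) * qnum 7 (5/3) * qnum 7 (2) * qnum 7 (3)) := by
    unfold qdimG2; norm_num
  rw [h0]
  rw [Gd_qn_2_1, Gd_qn_2_3, Gd_qn_8_3, Gd_qn_10_3, Gd_qn_4_1, Gd_qn_6_1, Gd_qn_1_3, Gd_qn_1_1, Gd_qn_4_3, Gd_qn_5_3, Gd_qn_3_1]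
  rw [Gd_ratio (ne_of_gt Gd_rpos3) one_ne_zero (ne_of_gt Gd_rpos3) (ne_of_gt Gd_rpos4) (ne_of_gt Gd_rpos5) (ne_of_gt Gd_rpos6) (ne_of_gt Gd_rpos9)]
  ring
private lemma Gd_sqrt21 : Real.sqrt 21 = ((-3) + 24*Real.cos (Real.pi/21) + 32*Real.cos (Real.pi/21)^2 + (-80)*Real.cos (Real.pi/21)^3 + (-32)*Real.cos (Real.pi/21)^4 + 64*Real.cos (Real.pi/21)^5) := by
  have hsq : ((-3) + 24*Real.cos (Real.pi/21) + 32*Real.cos (Real.pi/21)^2 + (-80)*Real.cos (Real.pi/21)^3 + (-32)*Real.cos (Real.pi/21)^4 + 64*Real.cos (Real.pi/21)^5)^2 = 21 := by linear_combination ((-12) + 48*Real.cos (Real.pi/21) + (-96)*Real.cos (Real.pi/21)^3 + 64*Real.cos (Real.pi/21)^4) * Gd_m6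
  have hge : (0:ℝ) ≤ ((-3) + 24*Real.cos (Real.pi/21) + 32*Real.cos (Real.pi/21)^2 + (-80)*Real.cos (Real.pi/21)^3 + (-32)*Real.cos (Real.pi/21)^4 + 64*Real.cos (Real.pi/21)^5) := by
    have h1 := Gd_cos_lb
    have h2 := Gd_cos_ub
    nlinarith [sq_nonneg (Real.cos (Real.pi/21) - 1), sq_nonneg (Real.cos (Real.pi/21) - 0.98), sq_nonneg (Real.cos (Real.pi/21)^2 - 1)]
  conv_lhs => rw [← hsq]
  exact Real.sqrt_sq hge
private lemma Gd_Draw_pos : 0 < ((-1) + 4*Real.cos (Real.pi/21)^2) * ((-4)*Real.cos (Real.pi/21) + 8*Real.cos (Real.pi/21)^3) * (1 + (-12)*Real.cos (Real.pi/21)^2 + 16*Real.cos (Real.pi/21)^4) * (6*Real.cos (Real.pi/21) + (-32)*Real.cos (Real.pi/21)^3 + 32*Real.cos (Real.pi/21)^5) * (1 + 2*Real.cos (Real.pi/21) + (-12)*Real.cos (Real.pi/21)^2 + 16*Real.cos (Real.pi/21)^4) := by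
  exact mul_pos (mul_pos (mul_pos (mul_pos Gd_rpos3 Gd_rpos4) Gd_rpos5) Gd_rpos6) Gd_rpos9

/-- The global dimension of the fusion category `A₃(G₂)`: the sum of the squares of the
quantum dimensions of the six simple objects (weights with 2λ1+λ2 ≤ 3) is
`(21/2)(5+√21)`. -/
theorem global_dimension_A3_G2 :
    ∑ p ∈ (Finset.range 4 ×ˢ Finset.range 4).filter (fun p => 2 * p.1 + p.2 ≤ 3),
      (qdimG2 p.1 p.2)^2 = 21 / 2 * (5 + Real.sqrt 21) := by
  rw [show (Finset.range 4 ×ˢ Finset.range 4).filter (fun p => 2 * p.1 + p.2 ≤ 3)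
      = ({(0,0),(0,1),(0,2),(0,3),(1,0),(1,1)} : Finset (ℕ×ℕ)) from by decide]
  rw [show ∑ p ∈ ({(0,0),(0,1),(0,2),(0,3),(1,0),(1,1)} : Finset (ℕ×ℕ)), (qdimG2 p.1 p.2)^2
      = (qdimG2 0 0)^2 + (qdimG2 0 1)^2 + (qdimG2 0 2)^2 + (qdimG2 0 3)^2
        + (qdimG2 1 0)^2 + (qdimG2 1 1)^2 from by
    rw [Finset.sum_insert (by decide), Finset.sum_insert (by decide), Finset.sum_insert (by decide),
      Finset.sum_insert (by decide), Finset.sum_insert (by decide), Finset.sum_singleton]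
    norm_num
    ring]
  rw [Gd_w00, Gd_w01, Gd_w02, Gd_w03, Gd_w10, Gd_w11, Gd_sqrt21]
  rw [div_pow, div_pow, div_pow, div_pow, div_pow, div_pow]
  rw [← add_div, ← add_div, ← add_div, ← add_div, ← add_div]
  rw [div_eq_iff (pow_ne_zero 2 (ne_of_gt Gd_Draw_pos))]
  linear_combination (16*Real.cos (Real.pi/21)^2 + 128*Real.cos (Real.pi/21)^3 + (-2848)*Real.cos (Real.pi/21)^4 + 72960*Real.cos (Real.pi/21)^5 + 1026688*Real.cos (Real.pi/21)^6 + (-959488)*Real.cos (Real.pi/21)^7 + (-42514688)*Real.cos (Real.pi/21)^8 + (-35935232)*Real.cos (Real.pi/21)^9 + 852767744*Real.cos (Real.pi/21)^10 + 1277278208*Real.cos (Real.pi/21)^11 + (-10640965632)*Real.cos (Real.pi/21)^12 + (-19677667328)*Real.cos (Real.pi/21)^13 + 91737702400*Real.cos (Real.pi/21)^14 + 192616038400*Real.cos (Real.pi/21)^15 + (-578936373248)*Real.cos (Real.pi/21)^16 + (-1346170257408)*Real.cos (Real.pi/21)^17 + 2780872572928*Real.cos (Real.pi/21)^18 + 7093464596480*Real.cos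 (Real.pi/21)^19 + (-10495785435136)*Real.cos (Real.pi/21)^20 + (-28967788609536)*Real.cos (Real.pi/21)^21 + 32037238996992*Real.cos (Real.pi/21)^22 + 92809293987840*Real.cos (Real.pi/21)^23 + (-81017494831104)*Real.cos (Real.pi/21)^24 + (-233909421867008)*Real.cos (Real.pi/21)^25 + 171955927908352*Real.cos (Real.pi/21)^26 + 462005068627968*Real.cos (Real.pi/21)^27 + (-305086559420416)*Real.cos (Real.pi/21)^28 + (-708807579664384)*Real.cos (Real.pi/21)^29 + 443382358867968*Real.cos (Real.pi/21)^30 + 832654572257280*Real.cos (Real.pi/21)^31 + (-511857022468096)*Real.cos (Real.pi/21)^32 + (-732695650893824)*Real.cos (Real.pi/21)^33 + 452380315353088*Real.cos (Real.pi/21)^34 + 466570887299072*Real.cos (Real.pi/21)^35 + (-292538812465152)*Real.cos (Real.pi/21)^36 + (-202859895324672)*Real.cos (Real.pi/21)^37 + 129742372077568*Real.cos (Real.pi/21)^38 + 53876069761024*Real.cos (Real.pi/21)^39 + (-35184372088832)*Real.cos (Real.pi/21)^40 + (-6597069766656)*Real.cos (Real.pi/21)^41 + 4398046511104*Real.cos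 (Real.pi/21)^42) * Gd_m6
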